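/- Let G be a unique product monoid and S = R*G a crossed product with action σ. Let M be a right R-module with annihilator J in R, and let J_G = {r ∈ R : σ(g)(r) ∈ J for all g ∈ G}. Then the annihilator in S of the induced module M*G = ⊕_{g∈G} M x̄_g is J_G * G = ⊕_{g∈G} J_G x̄_g. -/
import Mathlib


/-- A unique product monoid. -/
def IsUPM (G : Type*) [Monoid G] : Prop :=
  ∀ X Y : Finset G, X.Nonempty → Y.Nonempty →
    ∃ x ∈ X, ∃ y ∈ Y, ∀ x' ∈ X, ∀ y' ∈ Y, x' * y' = x * y → x' = x ∧ y' = y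

/-- Let `G` be a unique product monoid and `S = R*G` a crossed product with action
`σ` and unit-valued cocycle `c`.  Let `M` be a right `R`-module with annihilator
`J`, and let `N = M*G = ⊕_g M x̄_g` be the induced right `S`-module, given by
additive maps `j g : M →+ N` (`m ↦ m x̄_g`) with
`(m x̄_g)(r x̄_h) = m σ(g)(r) c(g,h) x̄_{gh}` and with
`(f : G →₀ M) ↦ ∑ j g (f g)` bijective.  Then the annihilator of `N` in `S` is
`J_G * G = ⊕_g J_G x̄_g`, where `J_G = {r : σ(g)(r) ∈ J for all g}`. -/
theorem stmt17 {G : Type*} [Monoid G] (hUP : IsUPM G)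
    {R S : Type*} [Ring R] [Ring S]
    (ι : R →+* S) (σ : G → R →+* R) (c : G → G → Rˣ) (xb : G → S)
    (hσe : σ 1 = RingHom.id R) (hxe : xb 1 = 1)
    (hxr : ∀ (g : G) (r : R), xb g * ι r = ι (σ g r) * xb g)
    (hxx : ∀ g h : G, xb g * xb h = ι (c g h : R) * xb (g * h))
    (hfree : Function.Bijective fun f : G →₀ R => f.sum fun g r => ι r * xb g)
    {M : Type*} [AddCommGroup M] [Module Rᵐᵒᵖ M]
    {N : Type*} [AddCommGroup N] [Module Sᵐᵒᵖ N] (j : G → M →+ N)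
    (hact : ∀ (g h : G) (m : M) (r : R),
      MulOpposite.op (ι r * xb h) • j g m =
        j (g * h) (MulOpposite.op (σ g r * (c g h : R)) • m))
    (hNfree : Function.Bijective fun f : G →₀ M => f.sum fun g m => j g m) :
    {s : S | ∀ n : N, MulOpposite.op s • n = 0} =
      {s : S | ∃ f : G →₀ R,
        (∀ g : G, f g ∈ {r : R | ∀ h : G, ∀ m : M, MulOpposite.op (σ h r) • m = 0}) ∧
        s = f.sum fun g r => ι r * xb g} := by
  classical
  -- The key cancellation lemma, using unique products:
  -- if `∑_{g ∈ Y} j (h*g) (mm g) = 0` then each `mm g = 0`.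
  have key : ∀ Y : Finset G, ∀ h : G, ∀ mm : G → M,
      (∑ g ∈ Y, j (h * g) (mm g)) = 0 → ∀ g ∈ Y, mm g = 0 := by
    intro Y
    induction Y using Finset.strongInduction with
    | _ Y ih =>
      intro h mm hsum g hg
      obtain ⟨x, hx, y, hy, huniq⟩ :=
        hUP {h} Y ⟨h, Finset.mem_singleton_self h⟩ ⟨g, hg⟩
      rw [Finset.mem_singleton] at hx
      have huniq' : ∀ g' ∈ Y, h * g' = h * y → g' = y := fun g' hg' he =>
        (huniq h (Finset.mem_singleton_self h) g' hg' (by rw [he, hx])).2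
      -- show that `mm y = 0`
      have hy0 : mm y = 0 := by
        have hF : (∑ g' ∈ Y, Finsupp.single (h * g') (mm g')) = (0 : G →₀ M) := by
          apply hNfree.injective
          show (Finsupp.liftAddHom (α := G) (M := M) (N := N)) j
              (∑ g' ∈ Y, Finsupp.single (h * g') (mm g'))
            = (Finsupp.liftAddHom (α := G) (M := M) (N := N)) j (0 : G →₀ M)
          rw [map_sum, map_zero]
          simpa [Finsupp.liftAddHom_apply_single] using hsum
        have happ := DFunLike.congr_fun hF (h * y)
        rw [Finsupp.finset_sum_apply] at happ
        have hsingle : ∀ g' ∈ Y,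
            (Finsupp.single (h * g') (mm g')) (h * y)
              = if g' = y then mm g' else 0 := by
          intro g' hg'
          by_cases hgy : g' = y
          · subst hgy; simp
          · rw [if_neg hgy, Finsupp.single_apply, if_neg]
            exact fun he => hgy (huniq' g' hg' he)
        rw [Finset.sum_congr rfl hsingle] at happ
        simpa [Finset.sum_ite_eq' Y y, hy] using happ
      by_cases hgy : g = y
      · rw [hgy]; exact hy0
      · refine ih (Y.erase y) (Finset.erase_ssubset hy) h mm ?_ g
          (Finset.mem_erase.2 ⟨hgy, hg⟩)
        rw [Finset.sum_erase Y (by rw [hy0, map_zero])]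
        exact hsum
  ext s
  simp only [Set.mem_setOf_eq]
  constructor
  · -- annihilator ⊆ J_G * G
    intro hs
    obtain ⟨f, hfs⟩ := hfree.surjective s
    refine ⟨f, ?_, hfs.symm⟩
    intro g0 h m
    -- expand `op s • j h m`
    have hexp : MulOpposite.op s • (j h m : N)
        = ∑ g ∈ f.support,
            j (h * g) (MulOpposite.op (σ h (f g) * (c h g : R)) • m) := by
      rw [← hfs]
      show MulOpposite.op (∑ g ∈ f.support, ι (f g) * xb g) • (j h m : N) = _
      rw [Finset.op_sum, Finset.sum_smul]
      exact Finset.sum_congr rfl fun g _ => hact h g m (f g)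
    have hzero : ∀ g ∈ f.support,
        MulOpposite.op (σ h (f g) * (c h g : R)) • m = 0 := by
      refine key f.support h _ ?_
      rw [← hexp]; exact hs (j h m)
    by_cases hg0 : g0 ∈ f.support
    · have h1 : MulOpposite.op ((c h g0 : R)) •
          (MulOpposite.op (σ h (f g0)) • m) = 0 := by
        rw [← mul_smul, ← MulOpposite.op_mul]
        exact hzero g0 hg0
      calc MulOpposite.op (σ h (f g0)) • m
          = MulOpposite.op ((((c h g0)⁻¹ : Rˣ) : R)) •
              (MulOpposite.op ((c h g0 : R)) •
                (MulOpposite.op (σ h (f g0)) • m)) := by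
            rw [← mul_smul, ← MulOpposite.op_mul, Units.mul_inv,
              MulOpposite.op_one, one_smul]
        _ = 0 := by rw [h1, smul_zero]
    · rw [Finsupp.notMem_support_iff.mp hg0, map_zero, MulOpposite.op_zero,
        zero_smul]
  · -- J_G * G ⊆ annihilator
    rintro ⟨f, hf, rfl⟩ n
    obtain ⟨F, rfl⟩ := hNfree.surjective n
    show MulOpposite.op (∑ g ∈ f.support, ι (f g) * xb g) •
        (∑ g ∈ F.support, j g (F g)) = 0
    rw [Finset.op_sum, Finset.sum_smul]
    refine Finset.sum_eq_zero fun g' _ => ?_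
    rw [Finset.smul_sum]
    refine Finset.sum_eq_zero fun g _ => ?_
    rw [hact g g' (F g) (f g'), MulOpposite.op_mul, mul_smul,
      hf g' g (F g), smul_zero, map_zero]
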